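/- Let H and H₀ be bounded self-adjoint operators on a complex Hilbert space 𝓗 with Cayley transforms U := (i − H)(i + H)⁻¹ and U₀ := (i − H₀)(i + H₀)⁻¹, and let Q be a bounded operator on 𝓗 commuting with H₀ (Q H₀ = H₀ Q). Then −(i/2)·U*·[U − U₀, Q] = (H − i)⁻¹ [H, Q] (H + i)⁻¹. -/

import Mathlib

open ContinuousLinearMap

variable {𝓗 : Type*} [NormedAddCommGroup 𝓗] [InnerProductSpace ℂ 𝓗] [CompleteSpace 𝓗]

/-- An operator `T` on a complex Hilbert space is trace class iff the sums
`∑ᵢ |⟨fᵢ, T eᵢ⟩|` over finite orthonormal families `(eᵢ)`, `(fᵢ)` are uniformly bounded. -/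
def IsTraceClass (T : 𝓗 →L[ℂ] 𝓗) : Prop :=
  ∃ M : ℝ, ∀ (n : ℕ) (e f : Fin n → 𝓗), Orthonormal ℂ e → Orthonormal ℂ f →
    ∑ i, ‖(inner ℂ (f i) (T (e i)) : ℂ)‖ ≤ M

/-- The trace norm `‖T‖₁ = sup { ∑ᵢ |⟨fᵢ, T eᵢ⟩| }`, the supremum being taken over all
finite orthonormal families `(eᵢ)`, `(fᵢ)` in the Hilbert space. -/
noncomputable def traceNorm (T : 𝓗 →L[ℂ] 𝓗) : ℝ :=
  sSup { x : ℝ | ∃ (n : ℕ) (e f : Fin n → 𝓗), Orthonormal ℂ e ∧ Orthonormal ℂ f ∧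
    x = ∑ i, ‖(inner ℂ (f i) (T (e i)) : ℂ)‖ }

/-- An operator `T` is Hilbert–Schmidt iff the sums `∑ᵢ ‖T eᵢ‖²` over finite
orthonormal families `(eᵢ)` are uniformly bounded. -/
def IsHilbertSchmidt (T : 𝓗 →L[ℂ] 𝓗) : Prop :=
  ∃ M : ℝ, ∀ (n : ℕ) (e : Fin n → 𝓗), Orthonormal ℂ e → ∑ i, ‖T (e i)‖ ^ 2 ≤ M

/-- A fixed Hilbert basis of `𝓗`. -/
noncomputable def aHilbertBasis (𝓗 : Type*) [NormedAddCommGroup 𝓗] [InnerProductSpace ℂ 𝓗]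
    [CompleteSpace 𝓗] : HilbertBasis (exists_hilbertBasis ℂ 𝓗).choose ℂ 𝓗 :=
  (exists_hilbertBasis ℂ 𝓗).choose_spec.choose

/-- The trace of an operator, computed in a fixed Hilbert basis.  For a trace class
operator this is independent of the chosen basis and equals the canonical trace. -/
noncomputable def opTrace (T : 𝓗 →L[ℂ] 𝓗) : ℂ :=
  ∑' i, (inner ℂ (aHilbertBasis 𝓗 i) (T (aHilbertBasis 𝓗 i)) : ℂ)

/-- The Cayley transform `(i - H)(i + H)⁻¹` of a bounded self-adjoint operator `H`
(for self-adjoint `H` the operator `i + H` is invertible in `B(𝓗)`, so `Ring.inverse`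
produces its genuine inverse). -/
noncomputable def cayley (H : 𝓗 →L[ℂ] 𝓗) : 𝓗 →L[ℂ] 𝓗 :=
  (Complex.I • (1 : 𝓗 →L[ℂ] 𝓗) - H) * Ring.inverse (Complex.I • (1 : 𝓗 →L[ℂ] 𝓗) + H)

/-- For bounded self-adjoint operators `H`, `H₀` with Cayley transforms
`U`, `U₀`, and a bounded operator `Q` commuting with `H₀`, one has
`-(i/2) U* [U - U₀, Q] = (H - i)⁻¹ [H, Q] (H + i)⁻¹`. -/
private lemma ringInverse_eq_of_mul' {R : Type*} [Ring R] {a b : R} (h1 : a * b = 1)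
    (h2 : b * a = 1) : Ring.inverse a = b := by
  have hu : IsUnit a := ⟨⟨a, b, h1, h2⟩, rfl⟩
  calc Ring.inverse a = Ring.inverse a * (a * b) := by rw [h1, mul_one]
    _ = (Ring.inverse a * a) * b := by rw [mul_assoc]
    _ = b := by rw [Ring.inverse_mul_cancel a hu, one_mul]

private lemma isUnit_I_smul_add' (H : 𝓗 →L[ℂ] 𝓗) (hH : IsSelfAdjoint H) :
    IsUnit (Complex.I • (1 : 𝓗 →L[ℂ] 𝓗) + H) := by
  have h : Complex.I ∉ spectrum ℂ (-H) := by
    intro hmem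
    have := (hH.neg).mem_spectrum_eq_re hmem
    simp [Complex.ext_iff] at this
  rw [spectrum.notMem_iff] at h
  simpa [Algebra.algebraMap_eq_smul_one, sub_neg_eq_add] using h

theorem cayley_commutator_identity
    (H H₀ Q : 𝓗 →L[ℂ] 𝓗) (hH : IsSelfAdjoint H) (hH₀ : IsSelfAdjoint H₀)
    (hQ : Q * H₀ = H₀ * Q) :
    (-(Complex.I / 2)) • (star (cayley H) *
        ((cayley H - cayley H₀) * Q - Q * (cayley H - cayley H₀))) =
      Ring.inverse (H - Complex.I • (1 : 𝓗 →L[ℂ] 𝓗)) * (H * Q - Q * H) *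
        Ring.inverse (H + Complex.I • (1 : 𝓗 →L[ℂ] 𝓗)) := by
  simp only [cayley]
  set j : 𝓗 →L[ℂ] 𝓗 := Complex.I • 1 with hj
  rw [add_comm H j]
  set P := Ring.inverse (j + H) with hPdef
  set P₀ := Ring.inverse (j + H₀) with hP₀def
  have hA : IsUnit (j + H) := isUnit_I_smul_add' H hH
  have hA₀ : IsUnit (j + H₀) := isUnit_I_smul_add' H₀ hH₀
  have hP1 : (j + H) * P = 1 := Ring.mul_inverse_cancel _ hA
  have hP2 : P * (j + H) = 1 := Ring.inverse_mul_cancel _ hA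
  have hQ1 : (j + H₀) * P₀ = 1 := Ring.mul_inverse_cancel _ hA₀
  have hQ2 : P₀ * (j + H₀) = 1 := Ring.inverse_mul_cancel _ hA₀
  have hstarj : star j = -j := by
    rw [hj, star_smul, star_one, Complex.star_def, Complex.conj_I, neg_smul]
  -- star P = Ring.inverse (H - j)
  have hsA : star (j + H) = H - j := by
    rw [star_add, hstarj, hH.star_eq]; abel
  have h1 : (H - j) * star P = 1 := by rw [← hsA, ← star_mul, hP2, star_one]
  have h2 : star P * (H - j) = 1 := by rw [← hsA, ← star_mul, hP1, star_one]
  have hN : Ring.inverse (H - j) = star P := ringInverse_eq_of_mul' h1 h2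
  -- Q commutes with everything built from H₀
  have hQj : Q * j = j * Q := by
    rw [hj, mul_smul_comm, smul_mul_assoc, mul_one, one_mul]
  have hQA₀ : Q * (j + H₀) = (j + H₀) * Q := by rw [mul_add, add_mul, hQ, hQj]
  have hQP₀ : Q * P₀ = P₀ * Q := by
    calc Q * P₀ = (P₀ * (j + H₀)) * Q * P₀ := by rw [hQ2, one_mul]
      _ = P₀ * (Q * (j + H₀)) * P₀ := by rw [hQA₀]; noncomm_ring
      _ = P₀ * Q * ((j + H₀) * P₀) := by noncomm_ring
      _ = P₀ * Q := by rw [hQ1, mul_one]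
  have hQU₀ : Q * ((j - H₀) * P₀) = ((j - H₀) * P₀) * Q := by
    have : Q * (j - H₀) = (j - H₀) * Q := by rw [mul_sub, sub_mul, hQ, hQj]
    calc Q * ((j - H₀) * P₀) = (Q * (j - H₀)) * P₀ := by rw [mul_assoc]
      _ = (j - H₀) * (Q * P₀) := by rw [this, mul_assoc]
      _ = ((j - H₀) * P₀) * Q := by rw [hQP₀, mul_assoc]
  -- reduce commutator to [U, Q]
  have hcomm : ((j - H) * P - (j - H₀) * P₀) * Q - Q * ((j - H) * P - (j - H₀) * P₀)
      = ((j - H) * P) * Q - Q * ((j - H) * P) := by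
    rw [sub_mul, mul_sub, hQU₀]; abel
  -- U = (2i) • P - 1
  have hU : (j - H) * P = (2 * Complex.I) • P - 1 := by
    have hjH : j - H = (2 * Complex.I) • (1 : 𝓗 →L[ℂ] 𝓗) - (j + H) := by
      rw [hj]; module
    rw [hjH, sub_mul, smul_mul_assoc, one_mul, hP1]
  -- key commutator computation
  have hstep : Q * (j + H) - (j + H) * Q = Q * H - H * Q := by
    rw [mul_add, add_mul, hQj]; abel
  have hPQ : P * Q - Q * P = P * (Q * H - H * Q) * P := by
    have e1 : P * (Q * ((j + H) * P)) = P * Q := by rw [hP1, mul_one]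
    have e2 : P * (j + H) * Q * P = Q * P := by rw [hP2, one_mul]
    calc P * Q - Q * P = P * (Q * ((j + H) * P)) - P * (j + H) * Q * P := by rw [e1, e2]
      _ = P * (Q * (j + H) - (j + H) * Q) * P := by noncomm_ring
      _ = P * (Q * H - H * Q) * P := by rw [hstep]
  have hUQ : ((j - H) * P) * Q - Q * ((j - H) * P)
      = (2 * Complex.I) • (P * (Q * H - H * Q) * P) := by
    rw [hU, ← hPQ]
    simp only [sub_mul, mul_sub, smul_mul_assoc, mul_smul_comm, one_mul, mul_one, smul_sub]
    abel
  -- star of U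
  have hsU : star ((j - H) * P) = star P * (-(j + H)) := by
    rw [star_mul, star_sub, hstarj, hH.star_eq, neg_add]
    congr 1; abel
  rw [hcomm, hUQ, hsU, hN]
  rw [mul_smul_comm, smul_smul]
  have hscal : -(Complex.I / 2) * (2 * Complex.I) = 1 := by
    ring_nf
    rw [Complex.I_sq]; ring
  rw [hscal, one_smul]
  calc star P * -(j + H) * (P * (Q * H - H * Q) * P)
      = -(star P * (((j + H) * P) * ((Q * H - H * Q) * P))) := by noncomm_ring
    _ = -(star P * ((Q * H - H * Q) * P)) := by rw [hP1, one_mul]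
    _ = star P * (H * Q - Q * H) * P := by noncomm_ring
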